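/- For Bernoulli measures Q₊, Q₋ with parameters p₊, p₋ and d := (√(p₊(1-p₋)) - √((1-p₊)p₋))², for any nonnegative integer k: ∫ (dQ₊^{⊗k} ∧ dQ₋^{⊗k}) ≥ 1 - √(1 - (1-d)^k) ≥ 1 - √(kd). -/

import Mathlib

open MeasureTheory Real
set_option maxHeartbeats 1000000

noncomputable def bern (p : ℝ) : Measure Bool :=
  (ENNReal.ofReal p) • Measure.dirac true + (ENNReal.ofReal (1 - p)) • Measure.dirac false

lemma bern_true (p : ℝ) : bern p {true} = ENNReal.ofReal p := by
  simp [bern, Measure.dirac_apply]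

lemma bern_false (p : ℝ) : bern p {false} = ENNReal.ofReal (1 - p) := by
  simp [bern, Measure.dirac_apply]

instance (p : ℝ) : IsFiniteMeasure (bern p) := by
  constructor
  simp [bern, Measure.dirac_apply]

lemma pi_ac {k : ℕ} (P Q : Measure Bool) [IsFiniteMeasure P] [IsFiniteMeasure Q]
    (h : P ≪ Q) :
    Measure.pi (fun _ : Fin k => P) ≪ Measure.pi (fun _ : Fin k => Q) := by
  intro s hs
  have hx : ∀ x : Fin k → Bool, x ∈ s → (Measure.pi (fun _ : Fin k => P)) {x} = 0 := by
    intro x hxs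
    have hq : (Measure.pi (fun _ : Fin k => Q)) {x} = 0 :=
      le_antisymm (hs ▸ measure_mono (Set.singleton_subset_iff.mpr hxs)) (zero_le)
    rw [← Set.univ_pi_singleton, Measure.pi_pi] at hq ⊢
    obtain ⟨i, -, hi⟩ := Finset.prod_eq_zero_iff.mp hq
    exact Finset.prod_eq_zero (Finset.mem_univ i) (h hi)
  have : s = ⋃ x ∈ s, {x} := by simp
  rw [this, measure_biUnion_null_iff (Set.to_countable s)]
  exact hx

lemma key_rnDeriv {k : ℕ} (P Q : Measure Bool) [IsFiniteMeasure P] [IsFiniteMeasure Q]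
    (h : P ≪ Q) (x : Fin k → Bool) :
    (Measure.pi (fun _ : Fin k => P)).rnDeriv (Measure.pi (fun _ : Fin k => Q)) x
      * (Measure.pi (fun _ : Fin k => Q)) {x} = ∏ i, P {x i} := by
  have h1 := Measure.setLIntegral_rnDeriv (pi_ac P Q h) {x}
  rw [lintegral_singleton] at h1
  rw [h1, ← Set.univ_pi_singleton, Measure.pi_pi]

lemma sqrt_prod' {ι : Type*} (s : Finset ι) (f : ι → ℝ) (h : ∀ i, 0 ≤ f i) :
    √(∏ i ∈ s, f i) = ∏ i ∈ s, √(f i) := by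
  induction s using Finset.cons_induction with
  | empty => simp
  | cons a s ha ih =>
    rw [Finset.prod_cons, Finset.prod_cons, Real.sqrt_mul (h a), ih]

lemma one_sub_pow_le' (d : ℝ) (hd0 : 0 ≤ d) (hd1 : d ≤ 1) (k : ℕ) :
    1 - (1 - d) ^ k ≤ k * d := by
  induction k with
  | zero => simp
  | succ n ih =>
    have h1 : (1 - d) ^ n ≤ 1 := pow_le_one₀ (by linarith) (by linarith)
    have h2 : (0:ℝ) ≤ (1 - d) ^ n := pow_nonneg (by linarith) n
    have h3 : (1 - d) ^ (n + 1) = (1 - d) ^ n * (1 - d) := pow_succ _ _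
    push_cast
    nlinarith

theorem bernoulli_product_min_similarity (pp pm : ℝ)
    (hpp : pp ∈ Set.Icc (0 : ℝ) 1) (hpm : pm ∈ Set.Icc (0 : ℝ) 1) (k : ℕ) :
    1 - Real.sqrt (1 - (1 - (Real.sqrt (pp * (1 - pm)) - Real.sqrt ((1 - pp) * pm)) ^ 2) ^ k)
      ≤ ∫ x, min
          (((Measure.pi (fun _ : Fin k => bern pp)).rnDeriv
            (Measure.pi (fun _ : Fin k => bern pp + bern pm)) x).toReal)
          (((Measure.pi (fun _ : Fin k => bern pm)).rnDeriv
            (Measure.pi (fun _ : Fin k => bern pp + bern pm)) x).toReal)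
        ∂(Measure.pi (fun _ : Fin k => bern pp + bern pm)) ∧
    1 - Real.sqrt (k * (Real.sqrt (pp * (1 - pm)) - Real.sqrt ((1 - pp) * pm)) ^ 2)
      ≤ 1 - Real.sqrt
          (1 - (1 - (Real.sqrt (pp * (1 - pm)) - Real.sqrt ((1 - pp) * pm)) ^ 2) ^ k) := by
  obtain ⟨hpp0, hpp1⟩ := hpp
  obtain ⟨hpm0, hpm1⟩ := hpm
  set d : ℝ := (√(pp * (1 - pm)) - √((1 - pp) * pm)) ^ 2 with hd
  set ρ : ℝ := √(pp * pm) + √((1 - pp) * (1 - pm)) with hρ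
  have hρ0 : 0 ≤ ρ := by positivity
  have e1 : √(pp * pm) ^ 2 = pp * pm := Real.sq_sqrt (by nlinarith)
  have e2 : √((1 - pp) * (1 - pm)) ^ 2 = (1 - pp) * (1 - pm) := Real.sq_sqrt (by nlinarith)
  have e3 : √(pp * (1 - pm)) ^ 2 = pp * (1 - pm) := Real.sq_sqrt (by nlinarith)
  have e4 : √((1 - pp) * pm) ^ 2 = (1 - pp) * pm := Real.sq_sqrt (by nlinarith)
  have h1 : √(pp * pm) * √((1 - pp) * (1 - pm)) = √(pp * (1 - pm)) * √((1 - pp) * pm) := by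
    rw [← Real.sqrt_mul (by nlinarith), ← Real.sqrt_mul (by nlinarith)]
    ring_nf
  have hρd : ρ ^ 2 = 1 - d := by
    rw [hρ, hd]; nlinarith [e1, e2, e3, e4, h1]
  have hd0 : 0 ≤ d := sq_nonneg _
  have hd1 : d ≤ 1 := by nlinarith [sq_nonneg ρ]
  constructor
  · -- main inequality
    classical
    have hPac : bern pp ≪ bern pp + bern pm :=
      Measure.absolutelyContinuous_of_le (Measure.le_add_right le_rfl)
    have hQac : bern pm ≪ bern pp + bern pm :=
      Measure.absolutelyContinuous_of_le (Measure.le_add_left le_rfl)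
    set ν := Measure.pi (fun _ : Fin k => bern pp + bern pm) with hν
    set A : Bool → ℝ := fun b => ((bern pp) {b}).toReal with hA
    set B : Bool → ℝ := fun b => ((bern pm) {b}).toReal with hB
    have hAt : A true = pp := by simp [hA, bern_true, ENNReal.toReal_ofReal hpp0]
    have hAf : A false = 1 - pp := by
      simp [hA, bern_false, ENNReal.toReal_ofReal (by linarith : (0:ℝ) ≤ 1 - pp)]
    have hBt : B true = pm := by simp [hB, bern_true, ENNReal.toReal_ofReal hpm0]
    have hBf : B false = 1 - pm := by
      simp [hB, bern_false, ENNReal.toReal_ofReal (by linarith : (0:ℝ) ≤ 1 - pm)]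
    have hA0 : ∀ b, 0 ≤ A b := fun b => ENNReal.toReal_nonneg
    have hB0 : ∀ b, 0 ≤ B b := fun b => ENNReal.toReal_nonneg
    set px : (Fin k → Bool) → ℝ := fun x => ∏ i, A (x i) with hpx
    set qx : (Fin k → Bool) → ℝ := fun x => ∏ i, B (x i) with hqx
    have hpx0 : ∀ x, 0 ≤ px x := fun x => Finset.prod_nonneg fun i _ => hA0 _
    have hqx0 : ∀ x, 0 ≤ qx x := fun x => Finset.prod_nonneg fun i _ => hB0 _
    rw [integral_fintype Integrable.of_finite]
    simp only [Measure.real]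
    have hsummand : ∀ x : Fin k → Bool,
        (ν {x}).toReal • min (((Measure.pi (fun _ : Fin k => bern pp)).rnDeriv ν x).toReal)
          (((Measure.pi (fun _ : Fin k => bern pm)).rnDeriv ν x).toReal)
        = min (px x) (qx x) := by
      intro x
      have kP := key_rnDeriv (bern pp) (bern pp + bern pm) hPac x
      have kQ := key_rnDeriv (bern pm) (bern pp + bern pm) hQac x
      rw [smul_eq_mul, mul_comm, min_mul_of_nonneg _ _ ENNReal.toReal_nonneg,
        ← ENNReal.toReal_mul, ← ENNReal.toReal_mul]
      rw [← hν] at kP kQ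
      rw [kP, kQ, ENNReal.toReal_prod, ENNReal.toReal_prod]
    simp_rw [hsummand]
    set S : ℝ := ∑ x : Fin k → Bool, min (px x) (qx x) with hS
    set T : ℝ := ∑ x : Fin k → Bool, max (px x) (qx x) with hT
    have hS0 : 0 ≤ S := Finset.sum_nonneg fun x _ => le_min (hpx0 x) (hqx0 x)
    have hT0 : 0 ≤ T := Finset.sum_nonneg fun x _ => le_trans (hpx0 x) (le_max_left _ _)
    have hAsum : ∑ b : Bool, A b = 1 := by rw [Fintype.sum_bool, hAt, hAf]; ring
    have hBsum : ∑ b : Bool, B b = 1 := by rw [Fintype.sum_bool, hBt, hBf]; ring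
    have hsumA : ∑ x : Fin k → Bool, px x = 1 := by
      rw [hpx, ← Fintype.prod_sum]
      simp only [hAsum, Finset.prod_const, one_pow]
    have hsumB : ∑ x : Fin k → Bool, qx x = 1 := by
      rw [hqx, ← Fintype.prod_sum]
      simp only [hBsum, Finset.prod_const, one_pow]
    have hST : S + T = 2 := by
      rw [hS, hT, ← Finset.sum_add_distrib]
      simp_rw [min_add_max]
      rw [Finset.sum_add_distrib, hsumA, hsumB]; norm_num
    set C : Bool → ℝ := fun b => √(A b * B b) with hC
    have hCsum : ∑ b : Bool, C b = ρ := by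
      rw [Fintype.sum_bool, hC]
      simp only [hAt, hAf, hBt, hBf]
      exact hρ.symm
    have hRsum : ∑ x : Fin k → Bool, √(px x * qx x) = ρ ^ k := by
      have hx : ∀ x : Fin k → Bool, √(px x * qx x) = ∏ i, C (x i) := by
        intro x
        rw [hpx, hqx]
        simp only
        rw [← Finset.prod_mul_distrib,
          sqrt_prod' _ _ (fun i => mul_nonneg (hA0 _) (hB0 _))]
      simp_rw [hx]
      rw [← Fintype.prod_sum, hCsum, Finset.prod_const]
      simp
    have hCS : ρ ^ k ≤ √S * √T := by
      rw [← hRsum]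
      have hmm : ∀ x : Fin k → Bool,
          √(px x * qx x) = √(min (px x) (qx x)) * √(max (px x) (qx x)) := by
        intro x
        rw [← Real.sqrt_mul (le_min (hpx0 x) (hqx0 x)), min_mul_max]
      simp_rw [hmm]
      exact Real.sum_sqrt_mul_sqrt_le _ (fun x => le_min (hpx0 x) (hqx0 x))
        (fun x => le_trans (hpx0 x) (le_max_left _ _))
    have hrk : (ρ ^ k) ^ 2 = (1 - d) ^ k := by rw [pow_right_comm, hρd]
    have h2 : (1 - d) ^ k ≤ S * T := by
      rw [← hrk]
      calc (ρ ^ k) ^ 2 ≤ (√S * √T) ^ 2 := pow_le_pow_left₀ (pow_nonneg hρ0 k) hCS 2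
        _ = S * T := by rw [mul_pow, Real.sq_sqrt hS0, Real.sq_sqrt hT0]
    have hT2 : T = 2 - S := by linarith
    rw [hT2] at h2
    have hsq : (1 - S) ^ 2 ≤ 1 - (1 - d) ^ k := by nlinarith
    have hfin : 1 - S ≤ √(1 - (1 - d) ^ k) := by
      calc 1 - S ≤ √((1 - S) ^ 2) := by rw [Real.sqrt_sq_eq_abs]; exact le_abs_self _
        _ ≤ √(1 - (1 - d) ^ k) := Real.sqrt_le_sqrt hsq
    linarith
  · have h5 : 1 - (1 - d) ^ k ≤ k * d := one_sub_pow_le' d hd0 hd1 k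
    have h6 := Real.sqrt_le_sqrt h5
    linarith
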